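/- Let O be an order in M_2(k) of the form [[O_k, I],[J, O_k]] for fractional ideals I, J of a discrete valuation ring O_k with IJ ⊆ O_k. Then O is the intersection of exactly two maximal orders of M_2(k) when the valuation of IJ equals 1, i.e., split local orders of level 1 are intersections of two maximal orders (Eichler orders). -/

import Mathlib

/-- An `O`-order of full rank in `M₂(k)`: a subalgebra which is a finitely
generated `O`-module spanning `M₂(k)` over `k`. -/
def IsOrderM2 (O k : Type*) [CommRing O] [Field k] [Algebra O k]
    (R : Subalgebra O (Matrix (Fin 2) (Fin 2) k)) : Prop :=
  (Subalgebra.toSubmodule R).FG ∧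
    Submodule.span k (R : Set (Matrix (Fin 2) (Fin 2) k)) = ⊤

/-- A maximal order in `M₂(k)`. -/
def IsMaximalOrderM2 (O k : Type*) [CommRing O] [Field k] [Algebra O k]
    (R : Subalgebra O (Matrix (Fin 2) (Fin 2) k)) : Prop :=
  IsOrderM2 O k R ∧ ∀ S, IsOrderM2 O k S → R ≤ S → R = S

set_option linter.unusedSectionVars false

open Matrix Polynomial

namespace Stmt7Aux

section MatId
variable {K : Type*} [CommRing K]

lemma mat_decomp (A : Matrix (Fin 2) (Fin 2) K) :
    A = A 0 0 • Matrix.single 0 0 (1:K) + A 0 1 • Matrix.single 0 1 (1:K) +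
        A 1 0 • Matrix.single 1 0 (1:K) + A 1 1 • Matrix.single 1 1 (1:K) := by
  ext a b
  fin_cases a <;> fin_cases b <;> simp [Matrix.single]

lemma I00 (A : Matrix (Fin 2) (Fin 2) K) :
    Matrix.single 0 0 (1:K) * A * Matrix.single 0 0 (1:K) = A 0 0 • Matrix.single 0 0 (1:K) := by
  ext a b
  fin_cases a <;> fin_cases b <;>
    simp [Matrix.mul_apply, Fin.sum_univ_two, Matrix.single]

lemma I01 (A : Matrix (Fin 2) (Fin 2) K) :
    Matrix.single 0 0 (1:K) * A * Matrix.single 1 1 (1:K) = A 0 1 • Matrix.single 0 1 (1:K) := by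
  ext a b
  fin_cases a <;> fin_cases b <;>
    simp [Matrix.mul_apply, Fin.sum_univ_two, Matrix.single]

lemma I10 (A : Matrix (Fin 2) (Fin 2) K) :
    Matrix.single 1 1 (1:K) * A * Matrix.single 0 0 (1:K) = A 1 0 • Matrix.single 1 0 (1:K) := by
  ext a b
  fin_cases a <;> fin_cases b <;>
    simp [Matrix.mul_apply, Fin.sum_univ_two, Matrix.single]

lemma I11 (A : Matrix (Fin 2) (Fin 2) K) :
    Matrix.single 1 1 (1:K) * A * Matrix.single 1 1 (1:K) = A 1 1 • Matrix.single 1 1 (1:K) := by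
  ext a b
  fin_cases a <;> fin_cases b <;>
    simp [Matrix.mul_apply, Fin.sum_univ_two, Matrix.single]

lemma I5 (x y : K) :
    (x • Matrix.single 0 1 (1:K) : Matrix (Fin 2) (Fin 2) K) *
        (y • Matrix.single 1 0 (1:K)) =
      (x * y) • Matrix.single 0 0 (1:K) := by
  ext a b
  fin_cases a <;> fin_cases b <;>
    simp [Matrix.mul_apply, Fin.sum_univ_two, Matrix.single]

lemma pow_diag_entry (x : K) (j : Fin 2) (i : ℕ) :
    ((x • Matrix.single j j (1:K)) ^ i) j j = x ^ i := by
  induction i with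
  | zero => simp
  | succ i ih =>
    rw [pow_succ, Matrix.mul_apply, Finset.sum_eq_single j]
    · simp only [Matrix.smul_apply, Matrix.single_apply_same, smul_eq_mul, mul_one, ih,
        pow_succ]
    · intro l _ hl
      have h0 : (x • Matrix.single j j (1:K)) l j = 0 := by
        rw [Matrix.smul_apply, Matrix.single_apply_of_ne]
        · simp
        · tauto
      rw [h0, mul_zero]
    · simp

end MatId

variable {O k : Type*} [CommRing O] [IsDomain O] [IsDiscreteValuationRing O]
  [Field k] [Algebra O k] [IsFractionRing O k]

lemma mem_range_of_smul_diag_mem (S : Subalgebra O (Matrix (Fin 2) (Fin 2) k))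
    (hfg : (Subalgebra.toSubmodule S).FG) {x : k} {j : Fin 2}
    (hx : x • Matrix.single j j (1:k) ∈ S) : x ∈ (algebraMap O k).range := by
  obtain ⟨p, pm, hp⟩ := IsIntegral.of_mem_of_fg S hfg _ hx
  rw [RingHom.mem_range, ← IsIntegrallyClosed.isIntegral_iff]
  refine ⟨p, pm, ?_⟩
  rw [← aeval_def] at hp ⊢
  have hNj : ((aeval (x • Matrix.single j j (1:k))) p) j j = (aeval x) p := by
    rw [aeval_eq_sum_range, aeval_eq_sum_range, Matrix.sum_apply]
    refine Finset.sum_congr rfl fun i _ => ?_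
    rw [Matrix.smul_apply, pow_diag_entry]
  rw [← hNj, hp, Matrix.zero_apply]

lemma alg_inj : Function.Injective (algebraMap O k) := IsFractionRing.injective O k

lemma inv_rep (π : O) (hπ : Irreducible π) {x : k} (hx : x ∉ (algebraMap O k).range) :
    ∃ r : O, x⁻¹ = algebraMap O k π * algebraMap O k r := by
  obtain ⟨a, b, hb, hab⟩ := IsFractionRing.div_surjective (A := O) x
  have hb0 : b ≠ 0 := nonZeroDivisors.ne_zero hb
  have hx0 : x ≠ 0 := fun h => hx ⟨0, by simp [h]⟩
  have ha0 : a ≠ 0 := by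
    rintro rfl
    apply hx0
    rw [← hab]
    simp
  have hbk : algebraMap O k b ≠ 0 := fun h => hb0 (alg_inj (by rw [h, _root_.map_zero]))
  have hak : algebraMap O k a ≠ 0 := fun h => ha0 (alg_inj (by rw [h, _root_.map_zero]))
  obtain ⟨i, w₁, hw₁⟩ := IsDiscreteValuationRing.eq_unit_mul_pow_irreducible ha0 hπ
  obtain ⟨j, w₂, hw₂⟩ := IsDiscreteValuationRing.eq_unit_mul_pow_irreducible hb0 hπ
  rcases le_or_gt j i with hji | hij
  · exfalso
    apply hx
    refine ⟨↑w₁ * ↑w₂⁻¹ * π ^ (i - j), ?_⟩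
    rw [← hab, eq_div_iff hbk, ← _root_.map_mul]
    congr 1
    rw [hw₁, hw₂]
    have hpow : π ^ (i - j) * π ^ j = π ^ i := by
      rw [← pow_add]
      congr 1
      omega
    calc ↑w₁ * ↑w₂⁻¹ * π ^ (i - j) * (↑w₂ * π ^ j)
        = ↑w₁ * (π ^ (i - j) * π ^ j) * (↑w₂⁻¹ * ↑w₂) := by ring
      _ = ↑w₁ * π ^ i := by rw [hpow, w₂.inv_mul, mul_one]
  · refine ⟨↑w₂ * ↑w₁⁻¹ * π ^ (j - i - 1), ?_⟩
    have hxinv : x⁻¹ = algebraMap O k b / algebraMap O k a := by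
      rw [← hab, inv_div]
    rw [hxinv, div_eq_iff hak, ← _root_.map_mul, ← _root_.map_mul]
    congr 1
    rw [hw₁, hw₂]
    have hpow : π * π ^ (j - i - 1) * π ^ i = π ^ j := by
      rw [← pow_succ', ← pow_add]
      congr 1
      omega
    calc (↑w₂ : O) * π ^ j
        = ↑w₂ * (π * π ^ (j - i - 1) * π ^ i) * (↑w₁⁻¹ * ↑w₁) := by
          rw [hpow, w₁.inv_mul, mul_one]
      _ = π * (↑w₂ * ↑w₁⁻¹ * π ^ (j - i - 1)) * (↑w₁ * π ^ i) := by ring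

lemma mul_not_mem (π : O) (hπ : Irreducible π) {x y : k}
    (hx : x ∉ (algebraMap O k).range) (hy : y ∉ (algebraMap O k).range) :
    algebraMap O k π * (x * y) ∉ (algebraMap O k).range := by
  rintro ⟨t, ht⟩
  obtain ⟨r, hr⟩ := inv_rep π hπ hx
  have hx0 : x ≠ 0 := fun h => hx ⟨0, by simp [h]⟩
  apply hy
  refine ⟨t * r, ?_⟩
  have h1 : x * (algebraMap O k π * algebraMap O k r) = 1 := by
    rw [← hr, mul_inv_cancel₀ hx0]
  calc algebraMap O k (t * r) = algebraMap O k t * algebraMap O k r := _root_.map_mul _ _ _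
    _ = algebraMap O k π * (x * y) * algebraMap O k r := by rw [ht]
    _ = y * (x * (algebraMap O k π * algebraMap O k r)) := by ring
    _ = y := by rw [h1, mul_one]

lemma inv_not_mem (π : O) (hπ : Irreducible π) :
    (algebraMap O k π)⁻¹ ∉ (algebraMap O k).range := by
  rintro ⟨t, ht⟩
  have hu0 : algebraMap O k π ≠ 0 := fun h => hπ.ne_zero (alg_inj (by rw [h, _root_.map_zero]))
  have h1 : algebraMap O k (π * t) = algebraMap O k 1 := by
    rw [_root_.map_mul, ht, mul_inv_cancel₀ hu0, _root_.map_one]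
  exact hπ.not_isUnit (IsUnit.of_mul_eq_one _ (alg_inj h1))

/-- The order `[[O, u^{-t}O],[u^t O, O]]` in `M₂(k)`. -/
def Mt (O k : Type*) [CommRing O] [Field k] [Algebra O k] (u : k) (hu : u ≠ 0) (t : ℤ) :
    Subalgebra O (Matrix (Fin 2) (Fin 2) k) where
  carrier := {A | A 0 0 ∈ (algebraMap O k).range ∧ u ^ t * A 0 1 ∈ (algebraMap O k).range ∧
    u ^ (-t) * A 1 0 ∈ (algebraMap O k).range ∧ A 1 1 ∈ (algebraMap O k).range}
  mul_mem' := by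
    rintro A B ⟨a0, a1, a2, a3⟩ ⟨b0, b1, b2, b3⟩
    have huu : u ^ t * u ^ (-t) = 1 := by
      rw [← zpow_add₀ hu]
      simp
    have e00 : (A * B) 0 0 = A 0 0 * B 0 0 + A 0 1 * B 1 0 := by
      simp [Matrix.mul_apply, Fin.sum_univ_two]
    have e01 : (A * B) 0 1 = A 0 0 * B 0 1 + A 0 1 * B 1 1 := by
      simp [Matrix.mul_apply, Fin.sum_univ_two]
    have e10 : (A * B) 1 0 = A 1 0 * B 0 0 + A 1 1 * B 1 0 := by
      simp [Matrix.mul_apply, Fin.sum_univ_two]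
    have e11 : (A * B) 1 1 = A 1 0 * B 0 1 + A 1 1 * B 1 1 := by
      simp [Matrix.mul_apply, Fin.sum_univ_two]
    refine ⟨?_, ?_, ?_, ?_⟩
    · rw [e00]
      have : A 0 1 * B 1 0 = (u ^ t * A 0 1) * (u ^ (-t) * B 1 0) := by
        calc A 0 1 * B 1 0 = (u ^ t * u ^ (-t)) * (A 0 1 * B 1 0) := by rw [huu, one_mul]
          _ = (u ^ t * A 0 1) * (u ^ (-t) * B 1 0) := by ring
      rw [this]
      exact add_mem (mul_mem a0 b0) (mul_mem a1 b2)
    · have : u ^ t * (A * B) 0 1 = A 0 0 * (u ^ t * B 0 1) + (u ^ t * A 0 1) * B 1 1 := by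
        rw [e01]; ring
      rw [this]
      exact add_mem (mul_mem a0 b1) (mul_mem a1 b3)
    · have : u ^ (-t) * (A * B) 1 0 = (u ^ (-t) * A 1 0) * B 0 0 + A 1 1 * (u ^ (-t) * B 1 0) := by
        rw [e10]; ring
      rw [this]
      exact add_mem (mul_mem a2 b0) (mul_mem a3 b2)
    · rw [e11]
      have : A 1 0 * B 0 1 = (u ^ (-t) * A 1 0) * (u ^ t * B 0 1) := by
        calc A 1 0 * B 0 1 = (u ^ t * u ^ (-t)) * (A 1 0 * B 0 1) := by rw [huu, one_mul]
          _ = _ := by ring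
      rw [this]
      exact add_mem (mul_mem a2 b1) (mul_mem a3 b3)
  one_mem' := by
    refine ⟨⟨1, _root_.map_one _⟩, ?_, ?_, ⟨1, _root_.map_one _⟩⟩ <;>
      simp [Matrix.one_apply]
    all_goals exact ⟨0, _root_.map_zero _⟩
  add_mem' := by
    rintro A B ⟨a0, a1, a2, a3⟩ ⟨b0, b1, b2, b3⟩
    refine ⟨add_mem a0 b0, ?_, ?_, add_mem a3 b3⟩
    · rw [Matrix.add_apply, mul_add]
      exact add_mem a1 b1
    · rw [Matrix.add_apply, mul_add]
      exact add_mem a2 b2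
  zero_mem' := by
    refine ⟨⟨0, _root_.map_zero _⟩, ?_, ?_, ⟨0, _root_.map_zero _⟩⟩ <;> simp <;>
      exact ⟨0, _root_.map_zero _⟩
  algebraMap_mem' := by
    intro r
    refine ⟨⟨r, ?_⟩, ?_, ?_, ⟨r, ?_⟩⟩ <;>
      simp [Matrix.algebraMap_matrix_apply]
    all_goals exact ⟨0, _root_.map_zero _⟩

lemma mem_Mt {u : k} {hu : u ≠ 0} {t : ℤ} {A : Matrix (Fin 2) (Fin 2) k} :
    A ∈ Mt O k u hu t ↔ A 0 0 ∈ (algebraMap O k).range ∧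
      u ^ t * A 0 1 ∈ (algebraMap O k).range ∧
      u ^ (-t) * A 1 0 ∈ (algebraMap O k).range ∧ A 1 1 ∈ (algebraMap O k).range :=
  Iff.rfl

section

lemma huu (u : k) (hu : u ≠ 0) (t : ℤ) : u ^ t * u ^ (-t) = 1 := by
  rw [← zpow_add₀ hu]; simp

variable (u : k) (hu : u ≠ 0) (t : ℤ)

lemma e00_mem : Matrix.single 0 0 (1:k) ∈ Mt O k u hu t := by
  rw [mem_Mt]
  refine ⟨⟨1, _root_.map_one _⟩, ?_, ?_, ⟨0, _root_.map_zero _⟩⟩ <;> simp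

lemma e11_mem : Matrix.single 1 1 (1:k) ∈ Mt O k u hu t := by
  rw [mem_Mt]
  refine ⟨⟨0, _root_.map_zero _⟩, ?_, ?_, ⟨1, _root_.map_one _⟩⟩ <;> simp

lemma e01_mem : (u ^ (-t) • Matrix.single 0 1 (1:k) : Matrix (Fin 2) (Fin 2) k) ∈
    Mt O k u hu t := by
  rw [mem_Mt]
  refine ⟨by simp, ?_, by simp, by simp⟩
  rw [Matrix.smul_apply, Matrix.single_apply_same, smul_eq_mul, mul_one, huu u hu t]
  exact ⟨1, _root_.map_one _⟩

lemma e10_mem : (u ^ t • Matrix.single 1 0 (1:k) : Matrix (Fin 2) (Fin 2) k) ∈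
    Mt O k u hu t := by
  rw [mem_Mt]
  refine ⟨by simp, by simp, ?_, by simp⟩
  rw [Matrix.smul_apply, Matrix.single_apply_same, smul_eq_mul, mul_one, mul_comm,
    huu u hu t]
  exact ⟨1, _root_.map_one _⟩

lemma Mt_order : IsOrderM2 O k (Mt O k u hu t) := by
  constructor
  · rw [Submodule.fg_def]
    refine ⟨{Matrix.single 0 0 (1:k), Matrix.single 1 1 (1:k),
      u ^ (-t) • Matrix.single 0 1 (1:k), u ^ t • Matrix.single 1 0 (1:k)}, ?_, ?_⟩
    · exact (Set.finite_singleton _).insert _ |>.insert _ |>.insert _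
    · apply le_antisymm
      · rw [Submodule.span_le]
        rintro A (rfl | rfl | rfl | rfl)
        · exact e00_mem u hu t
        · exact e11_mem u hu t
        · exact e01_mem u hu t
        · exact e10_mem u hu t
      · intro A hA
        obtain ⟨⟨c0, h0⟩, ⟨c1, h1⟩, ⟨c2, h2⟩, ⟨c3, h3⟩⟩ :=
          (mem_Mt (hu := hu) (t := t)).mp (show A ∈ Mt O k u hu t from hA)
        have hs1 : u ^ t * A 0 1 * u ^ (-t) = A 0 1 := by
          calc u ^ t * A 0 1 * u ^ (-t) = A 0 1 * (u ^ t * u ^ (-t)) := by ring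
            _ = A 0 1 := by rw [huu u hu t, mul_one]
        have hs2 : u ^ (-t) * A 1 0 * u ^ t = A 1 0 := by
          calc u ^ (-t) * A 1 0 * u ^ t = A 1 0 * (u ^ t * u ^ (-t)) := by ring
            _ = A 1 0 := by rw [huu u hu t, mul_one]
        have hA01 : (A 0 1 • Matrix.single 0 1 (1:k) : Matrix (Fin 2) (Fin 2) k) =
            c1 • (u ^ (-t) • Matrix.single 0 1 (1:k)) := by
          rw [← algebraMap_smul k c1, smul_smul, h1, hs1]
        have hA10 : (A 1 0 • Matrix.single 1 0 (1:k) : Matrix (Fin 2) (Fin 2) k) =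
            c2 • (u ^ t • Matrix.single 1 0 (1:k)) := by
          rw [← algebraMap_smul k c2, smul_smul, h2, hs2]
        have hA00 : (A 0 0 • Matrix.single 0 0 (1:k) : Matrix (Fin 2) (Fin 2) k) =
            c0 • Matrix.single 0 0 (1:k) := by
          rw [← algebraMap_smul k c0, h0]
        have hA11 : (A 1 1 • Matrix.single 1 1 (1:k) : Matrix (Fin 2) (Fin 2) k) =
            c3 • Matrix.single 1 1 (1:k) := by
          rw [← algebraMap_smul k c3, h3]
        have : (A : Matrix (Fin 2) (Fin 2) k) ∈ Submodule.span O
            ({Matrix.single 0 0 (1:k), Matrix.single 1 1 (1:k),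
              u ^ (-t) • Matrix.single 0 1 (1:k), u ^ t • Matrix.single 1 0 (1:k)} :
              Set (Matrix (Fin 2) (Fin 2) k)) := by
          rw [mat_decomp A, hA01, hA10, hA00, hA11]
          refine add_mem (add_mem (add_mem ?_ ?_) ?_) ?_ <;>
            apply Submodule.smul_mem <;> apply Submodule.subset_span
          · left; rfl
          · right; right; left; rfl
          · right; right; right; rfl
          · right; left; rfl
        exact this
  · rw [eq_top_iff]
    rintro A -
    have h00 : Matrix.single 0 0 (1:k) ∈
        Submodule.span k (Mt O k u hu t : Set (Matrix (Fin 2) (Fin 2) k)) :=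
      Submodule.subset_span (e00_mem u hu t)
    have h11 : Matrix.single 1 1 (1:k) ∈
        Submodule.span k (Mt O k u hu t : Set (Matrix (Fin 2) (Fin 2) k)) :=
      Submodule.subset_span (e11_mem u hu t)
    have h01 : Matrix.single 0 1 (1:k) ∈
        Submodule.span k (Mt O k u hu t : Set (Matrix (Fin 2) (Fin 2) k)) := by
      have := Submodule.smul_mem (Submodule.span k (Mt O k u hu t :
        Set (Matrix (Fin 2) (Fin 2) k))) (u ^ t) (Submodule.subset_span (e01_mem u hu t))
      rwa [smul_smul, huu u hu t, one_smul] at this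
    have h10 : Matrix.single 1 0 (1:k) ∈
        Submodule.span k (Mt O k u hu t : Set (Matrix (Fin 2) (Fin 2) k)) := by
      have := Submodule.smul_mem (Submodule.span k (Mt O k u hu t :
        Set (Matrix (Fin 2) (Fin 2) k))) (u ^ (-t)) (Submodule.subset_span (e10_mem u hu t))
      rwa [smul_smul, mul_comm, huu u hu t, one_smul] at this
    rw [mat_decomp A]
    exact add_mem (add_mem (add_mem (Submodule.smul_mem _ _ h00) (Submodule.smul_mem _ _ h01))
      (Submodule.smul_mem _ _ h10)) (Submodule.smul_mem _ _ h11)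

lemma Mt_maximal : IsMaximalOrderM2 O k (Mt O k u hu t) := by
  refine ⟨Mt_order u hu t, fun S hS hle => le_antisymm hle ?_⟩
  intro A hA
  have hfg := hS.1
  have h00 : Matrix.single 0 0 (1:k) ∈ S := hle (e00_mem u hu t)
  have h11 : Matrix.single 1 1 (1:k) ∈ S := hle (e11_mem u hu t)
  rw [mem_Mt]
  refine ⟨?_, ?_, ?_, ?_⟩
  · apply mem_range_of_smul_diag_mem S hfg (j := 0)
    have := S.mul_mem (S.mul_mem h00 hA) h00
    rwa [I00] at this
  · have h1 : (A 0 1 • Matrix.single 0 1 (1:k) : Matrix (Fin 2) (Fin 2) k) ∈ S := by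
      have := S.mul_mem (S.mul_mem h00 hA) h11
      rwa [I01] at this
    have h3 := S.mul_mem h1 (hle (e10_mem u hu t))
    rw [I5] at h3
    have := mem_range_of_smul_diag_mem S hfg h3
    rwa [mul_comm] at this
  · have h1 : (A 1 0 • Matrix.single 1 0 (1:k) : Matrix (Fin 2) (Fin 2) k) ∈ S := by
      have := S.mul_mem (S.mul_mem h11 hA) h00
      rwa [I10] at this
    have h3 := S.mul_mem (hle (e01_mem u hu t)) h1
    rw [I5] at h3
    exact mem_range_of_smul_diag_mem S hfg h3
  · apply mem_range_of_smul_diag_mem S hfg (j := 1)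
    have := S.mul_mem (S.mul_mem h11 hA) h11
    rwa [I11] at this

end

end Stmt7Aux

open Stmt7Aux in
/-- A split local order `[[O_k, π^{-m}O_k],[π^n O_k, O_k]]` of
level `n - m = 1` is the intersection of exactly two maximal orders of `M₂(k)`. -/
theorem stmt7 (k : Type*) [Field k] (O : Type*) [CommRing O] [IsDomain O]
    [IsDiscreteValuationRing O] [Algebra O k] [IsFractionRing O k]
    (π : O) (hπ : Irreducible π) (m n : ℤ) (hlevel : n - m = 1)
    (E : Subalgebra O (Matrix (Fin 2) (Fin 2) k))
    (hE : ∀ A : Matrix (Fin 2) (Fin 2) k,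
      A ∈ E ↔
        A 0 0 ∈ (algebraMap O k).range ∧
        (algebraMap O k π) ^ m * A 0 1 ∈ (algebraMap O k).range ∧
        (algebraMap O k π) ^ (-n) * A 1 0 ∈ (algebraMap O k).range ∧
        A 1 1 ∈ (algebraMap O k).range) :
    ∃ M₁ M₂ : Subalgebra O (Matrix (Fin 2) (Fin 2) k),
      IsMaximalOrderM2 O k M₁ ∧ IsMaximalOrderM2 O k M₂ ∧ M₁ ≠ M₂ ∧
      E = M₁ ⊓ M₂ ∧
      ∀ M₁' M₂' : Subalgebra O (Matrix (Fin 2) (Fin 2) k),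
        IsMaximalOrderM2 O k M₁' → IsMaximalOrderM2 O k M₂' → E = M₁' ⊓ M₂' →
          ({M₁', M₂'} : Set (Subalgebra O (Matrix (Fin 2) (Fin 2) k))) = {M₁, M₂} := by
  set u : k := algebraMap O k π with hudef
  have hu : u ≠ 0 := by
    intro h
    apply hπ.ne_zero
    apply alg_inj (k := k)
    rw [_root_.map_zero, ← hudef]
    exact h
  have hπmem : u ∈ (algebraMap O k).range := ⟨π, rfl⟩
  have huinv : u⁻¹ ∉ (algebraMap O k).range := inv_not_mem π hπ
  -- conversion lemmas between exponents
  have hmn1 : ∀ x : k, u ^ m * x ∈ (algebraMap O k).range → u ^ n * x ∈ (algebraMap O k).range := by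
    intro x hx
    have : u ^ n * x = u * (u ^ m * x) := by
      rw [show n = m + 1 by omega, zpow_add_one₀ hu]
      ring
    rw [this]
    exact mul_mem hπmem hx
  have hnm1 : ∀ x : k, u ^ (-n) * x ∈ (algebraMap O k).range →
      u ^ (-m) * x ∈ (algebraMap O k).range := by
    intro x hx
    have : u ^ (-m) * x = u * (u ^ (-n) * x) := by
      rw [show -m = -n + 1 by omega, zpow_add_one₀ hu]
      ring
    rw [this]
    exact mul_mem hπmem hx
  have hEeq : E = Mt O k u hu m ⊓ Mt O k u hu n := by
    ext A
    rw [hE, Algebra.mem_inf, mem_Mt, mem_Mt]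
    constructor
    · rintro ⟨h0, h1, h2, h3⟩
      exact ⟨⟨h0, h1, hnm1 _ h2, h3⟩, ⟨h0, hmn1 _ h1, h2, h3⟩⟩
    · rintro ⟨⟨h0, h1, -, h3⟩, ⟨-, -, h2, -⟩⟩
      exact ⟨h0, h1, h2, h3⟩
  have humn : u ^ m * u ^ (-n) = u⁻¹ := by
    rw [← zpow_add₀ hu, show m + -n = -1 by omega, _root_.zpow_neg_one]
  -- E is not equal to either maximal order
  have hEm : E ≠ Mt O k u hu m := by
    intro h
    have hmem : (u ^ m • Matrix.single 1 0 (1:k) : Matrix (Fin 2) (Fin 2) k) ∈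
        Mt O k u hu m := e10_mem u hu m
    rw [← h, hE] at hmem
    obtain ⟨-, -, hc, -⟩ := hmem
    rw [Matrix.smul_apply, Matrix.single_apply_same, smul_eq_mul, mul_one, mul_comm,
      humn] at hc
    exact huinv hc
  have hEn : E ≠ Mt O k u hu n := by
    intro h
    have hmem : (u ^ (-n) • Matrix.single 0 1 (1:k) : Matrix (Fin 2) (Fin 2) k) ∈
        Mt O k u hu n := e01_mem u hu n
    rw [← h, hE] at hmem
    obtain ⟨-, hc, -, -⟩ := hmem
    rw [Matrix.smul_apply, Matrix.single_apply_same, smul_eq_mul, mul_one, humn] at hc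
    exact huinv hc
  have hne : Mt O k u hu m ≠ Mt O k u hu n := by
    intro h
    have hmem : (u ^ (-n) • Matrix.single 0 1 (1:k) : Matrix (Fin 2) (Fin 2) k) ∈
        Mt O k u hu n := e01_mem u hu n
    rw [← h, mem_Mt] at hmem
    obtain ⟨-, hc, -, -⟩ := hmem
    rw [Matrix.smul_apply, Matrix.single_apply_same, smul_eq_mul, mul_one, humn] at hc
    exact huinv hc
  -- any maximal order containing E is one of the two
  have key : ∀ M : Subalgebra O (Matrix (Fin 2) (Fin 2) k), IsMaximalOrderM2 O k M → E ≤ M →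
      M = Mt O k u hu m ∨ M = Mt O k u hu n := by
    intro M hM hEM
    have hfg := hM.1.1
    have h00 : Matrix.single 0 0 (1:k) ∈ M := by
      apply hEM
      rw [hE]
      refine ⟨⟨1, _root_.map_one _⟩, ?_, ?_, ⟨0, _root_.map_zero _⟩⟩ <;> simp
    have h11 : Matrix.single 1 1 (1:k) ∈ M := by
      apply hEM
      rw [hE]
      refine ⟨⟨0, _root_.map_zero _⟩, ?_, ?_, ⟨1, _root_.map_one _⟩⟩ <;> simp
    have h01 : (u ^ (-m) • Matrix.single 0 1 (1:k) : Matrix (Fin 2) (Fin 2) k) ∈ M := by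
      apply hEM
      rw [hE]
      refine ⟨by simp, ?_, by simp, by simp⟩
      rw [Matrix.smul_apply, Matrix.single_apply_same, smul_eq_mul, mul_one, huu u hu m]
      exact ⟨1, _root_.map_one _⟩
    have h10 : (u ^ n • Matrix.single 1 0 (1:k) : Matrix (Fin 2) (Fin 2) k) ∈ M := by
      apply hEM
      rw [hE]
      refine ⟨by simp, by simp, ?_, by simp⟩
      rw [Matrix.smul_apply, Matrix.single_apply_same, smul_eq_mul, mul_one, mul_comm,
        huu u hu n]
      exact ⟨1, _root_.map_one _⟩
    have hdiag : ∀ A ∈ M, A 0 0 ∈ (algebraMap O k).range ∧ A 1 1 ∈ (algebraMap O k).range := by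
      intro A hA
      constructor
      · apply mem_range_of_smul_diag_mem M hfg (j := 0)
        have := M.mul_mem (M.mul_mem h00 hA) h00
        rwa [I00] at this
      · apply mem_range_of_smul_diag_mem M hfg (j := 1)
        have := M.mul_mem (M.mul_mem h11 hA) h11
        rwa [I11] at this
    have hoff01 : ∀ A ∈ M, (A 0 1 • Matrix.single 0 1 (1:k) : Matrix (Fin 2) (Fin 2) k) ∈ M := by
      intro A hA
      have := M.mul_mem (M.mul_mem h00 hA) h11
      rwa [I01] at this
    have hoff10 : ∀ A ∈ M, (A 1 0 • Matrix.single 1 0 (1:k) : Matrix (Fin 2) (Fin 2) k) ∈ M := by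
      intro A hA
      have := M.mul_mem (M.mul_mem h11 hA) h00
      rwa [I10] at this
    have hb : ∀ A ∈ M, u ^ n * A 0 1 ∈ (algebraMap O k).range := by
      intro A hA
      have h3 := M.mul_mem (hoff01 A hA) h10
      rw [I5] at h3
      have := mem_range_of_smul_diag_mem M hfg h3
      rwa [mul_comm] at this
    have hc : ∀ A ∈ M, u ^ (-m) * A 1 0 ∈ (algebraMap O k).range := by
      intro A hA
      have h3 := M.mul_mem h01 (hoff10 A hA)
      rw [I5] at h3
      exact mem_range_of_smul_diag_mem M hfg h3
    by_cases hcase : ∀ A ∈ M, u ^ m * A 0 1 ∈ (algebraMap O k).range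
    · left
      have hle : M ≤ Mt O k u hu m := by
        intro A hA
        exact ⟨(hdiag A hA).1, hcase A hA, hc A hA, (hdiag A hA).2⟩
      exact hM.2 _ (Mt_order u hu m) hle
    · right
      push_neg at hcase
      obtain ⟨A, hA, hAb⟩ := hcase
      have hle : M ≤ Mt O k u hu n := by
        intro B hB
        refine ⟨(hdiag B hB).1, hb B hB, ?_, (hdiag B hB).2⟩
        by_contra hBc
        have h3 := M.mul_mem (hoff01 A hA) (hoff10 B hB)
        rw [I5] at h3
        have hbc : A 0 1 * B 1 0 ∈ (algebraMap O k).range :=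
          mem_range_of_smul_diag_mem M hfg h3
        apply mul_not_mem π hπ hAb hBc
        have heq : algebraMap O k π * (u ^ m * A 0 1 * (u ^ (-n) * B 1 0)) =
            A 0 1 * B 1 0 := by
          have h1 : u * (u ^ m * u ^ (-n)) = 1 := by
            rw [humn, mul_inv_cancel₀ hu]
          calc u * (u ^ m * A 0 1 * (u ^ (-n) * B 1 0))
              = (u * (u ^ m * u ^ (-n))) * (A 0 1 * B 1 0) := by ring
            _ = A 0 1 * B 1 0 := by rw [h1, one_mul]
        rw [heq]
        exact hbc
      exact hM.2 _ (Mt_order u hu n) hle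
  refine ⟨Mt O k u hu m, Mt O k u hu n, Mt_maximal u hu m, Mt_maximal u hu n, hne, hEeq, ?_⟩
  intro M₁' M₂' h1 h2 hE'
  have e1 : M₁' = Mt O k u hu m ∨ M₁' = Mt O k u hu n :=
    key M₁' h1 (hE' ▸ inf_le_left)
  have e2 : M₂' = Mt O k u hu m ∨ M₂' = Mt O k u hu n :=
    key M₂' h2 (hE' ▸ inf_le_right)
  rcases e1 with rfl | rfl <;> rcases e2 with rfl | rfl
  · exact absurd (by rw [hE', inf_idem]) hEm
  · rfl
  · exact Set.pair_comm _ _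
  · exact absurd (by rw [hE', inf_idem]) hEn
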